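/- arXiv:1409.4685 — 2 statements merged into one kernel-verified Lean document; each statement's English description precedes it below -/
import Mathlib

section
/- Let T > 0, d ∈ ℕ, and let (μ_n)_{n≥1} and μ be Borel probability measures on the space C([0,T], ℝ^d) of continuous paths equipped with the supremum metric. If μ_n converges weakly to μ as n → ∞, then for every bounded continuous φ : ℝ^d → ℝ one has sup_{t∈[0,T]} | ∫ φ(ω(t)) dμ_n(ω) − ∫ φ(ω(t)) dμ(ω) | → 0 as n → ∞. -/
open MeasureTheory Filter Topology BoundedContinuousFunction

section Aux

variable {K : Type*} [MetricSpace K] [CompactSpace K] [Nonempty K]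

/-- The `δ`-oscillation of a continuous function on a compact metric space. -/
noncomputable def oscMod (δ : ℝ) (g : C(K, ℝ)) : ℝ :=
  ⨆ p : {p : K × K // dist p.1 p.2 ≤ δ}, |g p.val.1 - g p.val.2|

lemma abs_apply_sub_le (g : C(K, ℝ)) (s t : K) : |g s - g t| ≤ 2 * ‖g‖ := by
  calc |g s - g t| ≤ |g s| + |g t| := abs_sub _ _
    _ ≤ ‖g‖ + ‖g‖ := add_le_add (g.norm_coe_le_norm s) (g.norm_coe_le_norm t)
    _ = 2 * ‖g‖ := by ring

lemma oscMod_bddAbove (δ : ℝ) (g : C(K, ℝ)) :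
    BddAbove (Set.range fun p : {p : K × K // dist p.1 p.2 ≤ δ} => |g p.val.1 - g p.val.2|) := by
  refine ⟨2 * ‖g‖, ?_⟩
  rintro _ ⟨p, rfl⟩
  exact abs_apply_sub_le g _ _

lemma oscMod_nonneg (δ : ℝ) (g : C(K, ℝ)) : 0 ≤ oscMod δ g :=
  Real.iSup_nonneg fun _ => abs_nonneg _

lemma le_oscMod {δ : ℝ} (g : C(K, ℝ)) {s t : K} (h : dist s t ≤ δ) :
    |g s - g t| ≤ oscMod δ g :=
  le_ciSup (oscMod_bddAbove δ g) (⟨(s, t), h⟩ : {p : K × K // dist p.1 p.2 ≤ δ})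

lemma oscMod_le {δ C : ℝ} (g : C(K, ℝ)) (hC : 0 ≤ C)
    (h : ∀ s t : K, dist s t ≤ δ → |g s - g t| ≤ C) : oscMod δ g ≤ C :=
  Real.iSup_le (fun p => h p.val.1 p.val.2 p.2) hC

lemma oscMod_le_oscMod_add (δ : ℝ) (g g' : C(K, ℝ)) :
    oscMod δ g ≤ oscMod δ g' + 2 * dist g g' := by
  refine Real.iSup_le (fun p => ?_) (add_nonneg (oscMod_nonneg δ g') (by positivity))
  have h1 : |g p.val.1 - g p.val.2| ≤ |g' p.val.1 - g' p.val.2|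
      + (dist (g p.val.1) (g' p.val.1) + dist (g p.val.2) (g' p.val.2)) := by
    rw [Real.dist_eq, Real.dist_eq]
    have := abs_sub_abs_le_abs_sub (g p.val.1 - g p.val.2) (g' p.val.1 - g' p.val.2)
    have h2 : |g p.val.1 - g p.val.2 - (g' p.val.1 - g' p.val.2)| ≤
        |g p.val.1 - g' p.val.1| + |g p.val.2 - g' p.val.2| := by
      have : g p.val.1 - g p.val.2 - (g' p.val.1 - g' p.val.2)
          = (g p.val.1 - g' p.val.1) - (g p.val.2 - g' p.val.2) := by ring
      rw [this]
      exact abs_sub _ _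
    linarith
  refine h1.trans ?_
  have := le_oscMod g' p.2
  have d1 := ContinuousMap.dist_apply_le_dist (f := g) (g := g') p.val.1
  have d2 := ContinuousMap.dist_apply_le_dist (f := g) (g := g') p.val.2
  linarith

lemma continuous_oscMod (δ : ℝ) : Continuous fun g : C(K, ℝ) => oscMod δ g := by
  have : LipschitzWith 2 fun g : C(K, ℝ) => oscMod δ g := by
    refine LipschitzWith.of_dist_le_mul fun g g' => ?_
    rw [Real.dist_eq, abs_sub_le_iff]
    constructor
    · have := oscMod_le_oscMod_add δ g g'
      push_cast
      linarith
    · have := oscMod_le_oscMod_add δ g' g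
      rw [dist_comm] at this
      push_cast
      linarith
  exact this.continuous

variable {E : Type*} [MetricSpace E]
  [MeasurableSpace C(K, E)] [BorelSpace C(K, E)]

/-- The `δ`-oscillation of `φ ∘ ω` as a bounded continuous function of `ω`. -/
noncomputable def oscBCF (φ : E →ᵇ ℝ) (δ : ℝ) : C(K, E) →ᵇ ℝ :=
  BoundedContinuousFunction.ofNormedAddCommGroup
    (fun ω => oscMod δ (φ.toContinuousMap.comp ω))
    ((continuous_oscMod δ).comp (ContinuousMap.continuous_postcomp φ.toContinuousMap))
    (2 * ‖φ‖)
    (by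
      intro ω
      rw [Real.norm_eq_abs, abs_of_nonneg (oscMod_nonneg _ _)]
      refine oscMod_le _ (by positivity) fun s t _ => ?_
      calc |φ (ω s) - φ (ω t)| ≤ |φ (ω s)| + |φ (ω t)| := abs_sub _ _
        _ ≤ ‖φ‖ + ‖φ‖ := add_le_add (φ.norm_coe_le_norm _) (φ.norm_coe_le_norm _)
        _ = 2 * ‖φ‖ := by ring)

lemma oscBCF_apply (φ : E →ᵇ ℝ) (δ : ℝ) (ω : C(K, E)) :
    oscBCF φ δ ω = oscMod δ (φ.toContinuousMap.comp ω) := rfl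

lemma abs_sub_le_oscBCF (φ : E →ᵇ ℝ) {δ : ℝ} (ω : C(K, E)) {s t : K}
    (h : dist s t ≤ δ) : |φ (ω s) - φ (ω t)| ≤ oscBCF φ δ ω :=
  le_oscMod (φ.toContinuousMap.comp ω) h

lemma oscBCF_tendsto_zero (φ : E →ᵇ ℝ) (ω : C(K, E)) :
    Tendsto (fun k : ℕ => oscBCF φ ((k : ℝ) + 1)⁻¹ ω) atTop (𝓝 0) := by
  set g : C(K, ℝ) := φ.toContinuousMap.comp ω with hg
  have hUC : UniformContinuous (g : K → ℝ) :=
    CompactSpace.uniformContinuous_of_continuous g.continuous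
  rw [Metric.tendsto_atTop]
  intro ε hε
  obtain ⟨δ0, hδ0, hδ0'⟩ := Metric.uniformContinuous_iff.mp hUC (ε / 2) (by positivity)
  obtain ⟨N, hN⟩ := exists_nat_gt δ0⁻¹
  refine ⟨N, fun k hk => ?_⟩
  have hkδ : ((k : ℝ) + 1)⁻¹ < δ0 := by
    rw [inv_lt_comm₀ (by positivity) hδ0]
    calc δ0⁻¹ < N := hN
      _ ≤ (k : ℝ) := by exact_mod_cast hk
      _ < (k : ℝ) + 1 := by linarith
  have hb : oscBCF φ ((k : ℝ) + 1)⁻¹ ω ≤ ε / 2 := by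
    refine oscMod_le _ (by positivity) fun s t hst => ?_
    have : dist s t < δ0 := lt_of_le_of_lt hst hkδ
    have := hδ0' this
    rw [Real.dist_eq] at this
    exact this.le
  have hnn : (0:ℝ) ≤ oscBCF φ ((k : ℝ) + 1)⁻¹ ω := oscMod_nonneg _ _
  rw [Real.dist_eq, sub_zero, abs_of_nonneg hnn]
  exact lt_of_le_of_lt hb (by linarith)

/-- Evaluation at `t` composed with `φ`, as a bounded continuous function on `C(K, E)`. -/
noncomputable def evalBCF (φ : E →ᵇ ℝ) (t : K) : C(K, E) →ᵇ ℝ :=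
  φ.compContinuous ⟨fun ω => ω t, continuous_eval_const t⟩

lemma evalBCF_apply (φ : E →ᵇ ℝ) (t : K) (ω : C(K, E)) : evalBCF φ t ω = φ (ω t) := rfl

theorem aux_weak_perturbation
    (μ : ℕ → Measure C(K, E)) (ν : Measure C(K, E))
    [∀ n, IsProbabilityMeasure (μ n)] [IsProbabilityMeasure ν]
    (hweak : ∀ F : C(K, E) →ᵇ ℝ,
      Tendsto (fun n => ∫ ω, F ω ∂(μ n)) atTop (𝓝 (∫ ω, F ω ∂ν)))
    (φ : E →ᵇ ℝ) :
    Tendsto (fun n => ⨆ t : K,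
        |(∫ ω, φ (ω t) ∂(μ n)) - ∫ ω, φ (ω t) ∂ν|) atTop (𝓝 0) := by
  -- The ν-integral of the oscillation tends to 0 as δ → 0 (dominated convergence).
  have hosc : Tendsto (fun k : ℕ => ∫ ω, oscBCF φ ((k : ℝ) + 1)⁻¹ ω ∂ν) atTop (𝓝 0) := by
    have h0 : (0 : ℝ) = ∫ _ω : C(K, E), (0 : ℝ) ∂ν := by simp
    rw [h0]
    refine tendsto_integral_of_dominated_convergence (fun _ => 2 * ‖φ‖)
      (fun k => ((oscBCF φ ((k : ℝ) + 1)⁻¹).continuous).measurable.aestronglyMeasurable)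
      (integrable_const _) (fun k => Eventually.of_forall fun ω => ?_)
      (Eventually.of_forall fun ω => oscBCF_tendsto_zero φ ω)
    calc ‖oscBCF φ ((k : ℝ) + 1)⁻¹ ω‖ ≤ ‖oscBCF φ ((k : ℝ) + 1)⁻¹‖ :=
        (oscBCF φ _).norm_coe_le_norm ω
      _ ≤ 2 * ‖φ‖ := BoundedContinuousFunction.norm_ofNormedAddCommGroup_le _
          (by positivity) _
  rw [NormedAddCommGroup.tendsto_nhds_zero]
  intro ε hε
  -- choose δ with ∫ oscBCF φ δ dν < ε/4
  obtain ⟨k, hk⟩ := (hosc.eventually_lt_const (show (0:ℝ) < ε / 4 by positivity)).exists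
  set δ : ℝ := ((k : ℝ) + 1)⁻¹ with hδdef
  have hδpos : 0 < δ := by positivity
  -- finite δ-net of K
  obtain ⟨s, hs⟩ := isCompact_univ.elim_finite_subcover (fun t : K => Metric.ball t δ)
    (fun t => Metric.isOpen_ball) (fun t _ => Set.mem_iUnion.2 ⟨t, Metric.mem_ball_self hδpos⟩)
  -- events
  have ev1 : ∀ᶠ n in atTop, ∫ ω, oscBCF φ δ ω ∂(μ n) < ε / 4 :=
    (hweak (oscBCF φ δ)).eventually_lt_const hk
  have ev2 : ∀ᶠ n in atTop, ∀ i ∈ s, |(∫ ω, φ (ω i) ∂(μ n)) - ∫ ω, φ (ω i) ∂ν| < ε / 4 := by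
    rw [eventually_all_finset]
    intro i _
    have := hweak (evalBCF φ i)
    simp only [evalBCF_apply] at this
    have := (Metric.tendsto_nhds.mp this) (ε / 4) (by positivity)
    filter_upwards [this] with n hn
    rwa [Real.dist_eq] at hn
  filter_upwards [ev1, ev2] with n hn1 hn2
  -- key pointwise bound
  have key : ∀ t : K, |(∫ ω, φ (ω t) ∂(μ n)) - ∫ ω, φ (ω t) ∂ν| ≤ 3 * (ε / 4) := by
    intro t
    obtain ⟨i, his, hti⟩ : ∃ i ∈ s, t ∈ Metric.ball i δ := by
      have := hs (Set.mem_univ t)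
      simpa using this
    have hdist : dist t i ≤ δ := (Metric.mem_ball.mp hti).le
    -- difference of integrals at nearby times is bounded by the oscillation integral
    have step : ∀ (ρ : Measure C(K, E)), IsProbabilityMeasure ρ →
        |(∫ ω, φ (ω t) ∂ρ) - ∫ ω, φ (ω i) ∂ρ| ≤ ∫ ω, oscBCF φ δ ω ∂ρ := by
      intro ρ hρ
      have hi1 : Integrable (fun ω => φ (ω t)) ρ := by
        have := (evalBCF φ t).integrable ρ
        exact this
      have hi2 : Integrable (fun ω => φ (ω i)) ρ := by
        have := (evalBCF φ i).integrable ρ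
        exact this
      rw [← integral_sub hi1 hi2]
      have habs : |∫ ω, (φ (ω t) - φ (ω i)) ∂ρ| ≤ ∫ ω, |φ (ω t) - φ (ω i)| ∂ρ := by
        simpa [Real.norm_eq_abs] using
          norm_integral_le_integral_norm (μ := ρ) (fun ω => φ (ω t) - φ (ω i))
      have hmono : (∫ ω, |φ (ω t) - φ (ω i)| ∂ρ) ≤ ∫ ω, oscBCF φ δ ω ∂ρ := by
        refine integral_mono (hi1.sub hi2).abs ((oscBCF φ δ).integrable ρ) fun ω => ?_
        exact abs_sub_le_oscBCF φ ω hdist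
      exact habs.trans hmono
    have e1 := step (μ n) inferInstance
    have e2 := step ν inferInstance
    have e3 := hn2 i his
    have A := abs_sub_le (∫ ω, φ (ω t) ∂(μ n)) (∫ ω, φ (ω i) ∂(μ n)) (∫ ω, φ (ω t) ∂ν)
    have B := abs_sub_le (∫ ω, φ (ω i) ∂(μ n)) (∫ ω, φ (ω i) ∂ν) (∫ ω, φ (ω t) ∂ν)
    have C : |(∫ ω, φ (ω i) ∂ν) - ∫ ω, φ (ω t) ∂ν|
        = |(∫ ω, φ (ω t) ∂ν) - ∫ ω, φ (ω i) ∂ν| := abs_sub_comm _ _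
    rw [C] at B
    linarith
  have hsup : (⨆ t : K, |(∫ ω, φ (ω t) ∂(μ n)) - ∫ ω, φ (ω t) ∂ν|) ≤ 3 * (ε / 4) :=
    Real.iSup_le key (by positivity)
  have hnn : 0 ≤ ⨆ t : K, |(∫ ω, φ (ω t) ∂(μ n)) - ∫ ω, φ (ω t) ∂ν| :=
    Real.iSup_nonneg fun _ => abs_nonneg _
  rw [Real.norm_eq_abs, abs_of_nonneg hnn]
  linarith

end Aux

/-- If Borel probability measures `μ n` on `C([0,T], ℝ^d)` (with the sup metric)
converge weakly to `ν`, then for every bounded continuous `φ : ℝ^d → ℝ`,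
`sup_{t ∈ [0,T]} |∫ φ(ω(t)) dμ_n(ω) − ∫ φ(ω(t)) dν(ω)| → 0`. -/
theorem weak_convergence_implies_weak_perturbation (T : ℝ) (hT : 0 < T) (d : ℕ)
    [MeasurableSpace C(Set.Icc (0:ℝ) T, EuclideanSpace ℝ (Fin d))]
    [BorelSpace C(Set.Icc (0:ℝ) T, EuclideanSpace ℝ (Fin d))]
    (μ : ℕ → Measure C(Set.Icc (0:ℝ) T, EuclideanSpace ℝ (Fin d)))
    (ν : Measure C(Set.Icc (0:ℝ) T, EuclideanSpace ℝ (Fin d)))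
    [∀ n, IsProbabilityMeasure (μ n)] [IsProbabilityMeasure ν]
    (hweak : ∀ F : C(Set.Icc (0:ℝ) T, EuclideanSpace ℝ (Fin d)) →ᵇ ℝ,
      Tendsto (fun n => ∫ ω, F ω ∂(μ n)) atTop (𝓝 (∫ ω, F ω ∂ν)))
    (φ : EuclideanSpace ℝ (Fin d) →ᵇ ℝ) :
    Tendsto (fun n => ⨆ t : Set.Icc (0:ℝ) T,
        |(∫ ω, φ (ω t) ∂(μ n)) - ∫ ω, φ (ω t) ∂ν|) atTop (𝓝 0) := by
  haveI : Nonempty (Set.Icc (0:ℝ) T) := ⟨⟨0, le_refl 0, hT.le⟩⟩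
  exact aux_weak_perturbation μ ν hweak φ
end

section
/- Let m, n ∈ ℕ, let A be a real m×n matrix with rank(A) = n, let b ∈ ℝ^m, and let θ̂ be the unique global minimizer of x ↦ ‖Ax − b‖₂. Let (A_k)_{k≥1} be m×n matrices with A_k → A entrywise and (b_k)_{k≥1} ⊂ ℝ^m with b_k → b. If for each k, x_k ∈ ℝ^n is any global minimizer of x ↦ ‖A_k x − b_k‖₂, then x_k → θ̂ as k → ∞. -/
open Filter Topology Matrix

set_option maxHeartbeats 1000000

private lemma quad_aux {W c : ℝ} (hW : 0 ≤ W)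
    (h : ∀ t : ℝ, 0 ≤ t ^ 2 * W + 2 * t * c) : c = 0 := by
  have hd : (0 : ℝ) < W + 1 := by linarith
  have ht := h (-c / (W + 1))
  have h2 : 0 ≤ (c ^ 2 * W - 2 * c ^ 2 * (W + 1)) / (W + 1) ^ 2 := by
    have : (-c / (W + 1)) ^ 2 * W + 2 * (-c / (W + 1)) * c
        = (c ^ 2 * W - 2 * c ^ 2 * (W + 1)) / (W + 1) ^ 2 := by
      field_simp; ring
    linarith [this ▸ ht]
  have h3 : (0 : ℝ) < (W + 1) ^ 2 := by positivity
  have h4 : 0 ≤ c ^ 2 * W - 2 * c ^ 2 * (W + 1) := by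
    exact (div_nonneg_iff.mp h2).resolve_right (fun ⟨_, hb⟩ => absurd h3 (not_lt.mpr hb)) |>.1
  nlinarith [sq_nonneg c]

private lemma normal_equations {m n : ℕ} (A : Matrix (Fin m) (Fin n) ℝ)
    (b : EuclideanSpace ℝ (Fin m)) (x : EuclideanSpace ℝ (Fin n))
    (h : ∀ y, ‖Matrix.toEuclideanLin A x - b‖ ≤ ‖Matrix.toEuclideanLin A y - b‖) :
    (Aᵀ * A) *ᵥ (WithLp.equiv 2 _ x) = Aᵀ *ᵥ (WithLp.equiv 2 _ b) := by
  have key : ∀ v : EuclideanSpace ℝ (Fin n),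
      inner ℝ (Matrix.toEuclideanLin A x - b) (Matrix.toEuclideanLin A v) = (0 : ℝ) := by
    intro v
    set r := Matrix.toEuclideanLin A x - b with hr
    set w := Matrix.toEuclideanLin A v with hw
    refine quad_aux (W := ‖w‖ ^ 2) (sq_nonneg _) (fun t => ?_)
    have h1 := h (x + t • v)
    have h2 : Matrix.toEuclideanLin A (x + t • v) - b = r + t • w := by
      simp only [map_add, _root_.map_smul, hr, hw]; abel
    rw [h2] at h1
    have h3 : ‖r‖ ^ 2 ≤ ‖r + t • w‖ ^ 2 := by
      have := norm_nonneg r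
      nlinarith
    have h4 : ‖r + t • w‖ ^ 2 = ‖r‖ ^ 2 + 2 * (t * inner ℝ r w) + t ^ 2 * ‖w‖ ^ 2 := by
      rw [norm_add_sq_real, real_inner_smul_right, norm_smul]
      simp [mul_pow, sq_abs, Real.norm_eq_abs]
    rw [h4] at h3
    linarith
  funext j
  have hv := key ((WithLp.equiv 2 (Fin n → ℝ)).symm (Pi.single j 1))
  have hv' : ∑ i, ((A *ᵥ (WithLp.equiv 2 _ x)) i - (WithLp.equiv 2 _ b) i) * A i j = 0 := by
    rw [show Matrix.toEuclideanLin A ((WithLp.equiv 2 (Fin n → ℝ)).symm (Pi.single j 1))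
        = (WithLp.equiv 2 (Fin m → ℝ)).symm (A *ᵥ Pi.single j 1) from rfl] at hv
    rw [PiLp.inner_apply] at hv
    simpa [Matrix.mulVec_single, Matrix.toEuclideanLin_apply, mul_comm] using hv
  have : ((A *ᵥ (WithLp.equiv 2 _ x) - WithLp.equiv 2 _ b) ᵥ* A) j = 0 := by
    simpa [Matrix.vecMul, dotProduct, Pi.sub_apply] using hv'
  rw [← Matrix.mulVec_transpose] at this
  rw [Matrix.mulVec_sub] at this
  have := sub_eq_zero.mp this
  rw [← Matrix.mulVec_mulVec]
  exact this

private lemma isUnit_det_of_rank {n : ℕ} (M : Matrix (Fin n) (Fin n) ℝ)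
    (h : M.rank = n) : IsUnit M.det := by
  rw [← Matrix.isUnit_iff_isUnit_det, ← Matrix.mulVec_surjective_iff_isUnit]
  have : LinearMap.range M.mulVecLin = ⊤ := by
    apply Submodule.eq_top_of_finrank_eq
    rw [← Matrix.rank, h, Module.finrank_pi]
    simp
  intro y
  obtain ⟨x, hx⟩ := LinearMap.range_eq_top.mp this y
  exact ⟨x, hx⟩

/-- If `A` has full column rank `n`, `θ̂` is the (unique) global minimizer of
`x ↦ ‖Ax − b‖₂`, `A_k → A` entrywise, `b_k → b`, and each `x_k` is a global minimizer of
`x ↦ ‖A_k x − b_k‖₂`, then `x_k → θ̂`. -/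
theorem least_squares_solution_continuous (m n : ℕ)
    (A : Matrix (Fin m) (Fin n) ℝ) (hA : A.rank = n)
    (b : EuclideanSpace ℝ (Fin m)) (θhat : EuclideanSpace ℝ (Fin n))
    (hθhat : ∀ y, ‖Matrix.toEuclideanLin A θhat - b‖ ≤ ‖Matrix.toEuclideanLin A y - b‖)
    (Ak : ℕ → Matrix (Fin m) (Fin n) ℝ)
    (hAk : ∀ i j, Tendsto (fun k => Ak k i j) atTop (𝓝 (A i j)))
    (bk : ℕ → EuclideanSpace ℝ (Fin m)) (hbk : Tendsto bk atTop (𝓝 b))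
    (xk : ℕ → EuclideanSpace ℝ (Fin n))
    (hxk : ∀ k y, ‖Matrix.toEuclideanLin (Ak k) (xk k) - bk k‖ ≤
      ‖Matrix.toEuclideanLin (Ak k) y - bk k‖) :
    Tendsto xk atTop (𝓝 θhat) := by
  classical
  set M : Matrix (Fin n) (Fin n) ℝ := Aᵀ * A with hM
  set Mk : ℕ → Matrix (Fin n) (Fin n) ℝ := fun k => (Ak k)ᵀ * Ak k with hMk
  have hMunit : IsUnit M.det := by
    apply isUnit_det_of_rank
    rw [hM, Matrix.rank_transpose_mul_self, hA]
  have hne : M.det ≠ 0 := hMunit.ne_zero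
  -- normal equations for θhat
  have hθ : WithLp.equiv 2 (Fin n → ℝ) θhat = M⁻¹ *ᵥ (Aᵀ *ᵥ WithLp.equiv 2 _ b) := by
    have hne' := normal_equations A b θhat hθhat
    have := congrArg (fun v => M⁻¹ *ᵥ v) hne'
    simpa [Matrix.mulVec_mulVec, (show M⁻¹ * (Aᵀ * A) = 1 from Matrix.nonsing_inv_mul M hMunit), Matrix.one_mulVec] using this
  -- convergence of the matrices
  have hAk' : Tendsto Ak atTop (𝓝 A) := by
    exact tendsto_pi_nhds.2 fun i => tendsto_pi_nhds.2 fun j => hAk i j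
  have hbk' : Tendsto (fun k => WithLp.equiv 2 (Fin m → ℝ) (bk k)) atTop
      (𝓝 (WithLp.equiv 2 _ b)) :=
    ((PiLp.continuous_ofLp 2 (fun _ : Fin m => ℝ)).tendsto b).comp hbk
  have hMk' : Tendsto Mk atTop (𝓝 M) := by
    have cont : Continuous (fun P : Matrix (Fin m) (Fin n) ℝ => Pᵀ * P) :=
      (continuous_id.matrix_transpose).matrix_mul continuous_id
    exact (cont.tendsto A).comp hAk'
  have hdet : Tendsto (fun k => (Mk k).det) atTop (𝓝 M.det) :=
    ((continuous_id.matrix_det).tendsto M).comp hMk'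
  have hev : ∀ᶠ k in atTop, (Mk k).det ≠ 0 := hdet.eventually_ne hne
  have hinv : Tendsto (fun k => (Mk k)⁻¹) atTop (𝓝 M⁻¹) := by
    have h1 : Tendsto (fun k => ((Mk k).det)⁻¹) atTop (𝓝 (M.det)⁻¹) := hdet.inv₀ hne
    have h2 : Tendsto (fun k => (Mk k).adjugate) atTop (𝓝 M.adjugate) :=
      ((continuous_id.matrix_adjugate).tendsto M).comp hMk'
    have h3 := h1.smul h2
    simpa [Matrix.inv_def, Ring.inverse_eq_inv] using h3
  have hAkT : Tendsto (fun k => (Ak k)ᵀ) atTop (𝓝 Aᵀ) :=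
    ((continuous_id.matrix_transpose).tendsto A).comp hAk'
  have contmv : ∀ {p q : ℕ}, Continuous (fun pr : Matrix (Fin p) (Fin q) ℝ × (Fin q → ℝ) =>
      pr.1 *ᵥ pr.2) := fun {p q} => continuous_fst.matrix_mulVec continuous_snd
  have hc : Tendsto (fun k => (Ak k)ᵀ *ᵥ WithLp.equiv 2 (Fin m → ℝ) (bk k)) atTop
      (𝓝 (Aᵀ *ᵥ WithLp.equiv 2 _ b)) :=
    (contmv.tendsto (Aᵀ, WithLp.equiv 2 _ b)).comp (hAkT.prodMk_nhds hbk')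
  have hg : Tendsto (fun k => (Mk k)⁻¹ *ᵥ ((Ak k)ᵀ *ᵥ WithLp.equiv 2 (Fin m → ℝ) (bk k)))
      atTop (𝓝 (M⁻¹ *ᵥ (Aᵀ *ᵥ WithLp.equiv 2 _ b))) := by
    have h1 : Tendsto (fun k => ((Mk k)⁻¹, (Ak k)ᵀ *ᵥ WithLp.equiv 2 (Fin m → ℝ) (bk k)))
        atTop (𝓝 (M⁻¹, Aᵀ *ᵥ WithLp.equiv 2 _ b)) := hinv.prodMk_nhds hc
    have h2 := (contmv.tendsto (M⁻¹, Aᵀ *ᵥ WithLp.equiv 2 _ b)).comp h1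
    exact h2
  -- eventually xk has the explicit formula
  have heq : ∀ᶠ k in atTop, WithLp.equiv 2 (Fin n → ℝ) (xk k)
      = (Mk k)⁻¹ *ᵥ ((Ak k)ᵀ *ᵥ WithLp.equiv 2 (Fin m → ℝ) (bk k)) := by
    filter_upwards [hev] with k hk
    have hnk := normal_equations (Ak k) (bk k) (xk k) (hxk k)
    have hu : IsUnit (Mk k).det := isUnit_iff_ne_zero.mpr hk
    have := congrArg (fun v => (Mk k)⁻¹ *ᵥ v) hnk
    simpa [Matrix.mulVec_mulVec, (show (Mk k)⁻¹ * ((Ak k)ᵀ * Ak k) = 1 from Matrix.nonsing_inv_mul _ hu), Matrix.one_mulVec] using this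
  have hxk' : Tendsto (fun k => WithLp.equiv 2 (Fin n → ℝ) (xk k)) atTop
      (𝓝 (WithLp.equiv 2 _ θhat)) := by
    rw [hθ]
    exact Tendsto.congr' (heq.mono fun k hk => hk.symm) hg
  have := ((PiLp.continuous_toLp 2 (fun _ : Fin n => ℝ)).tendsto
      (WithLp.equiv 2 _ θhat)).comp hxk'
  simpa [Function.comp_def] using this
end
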